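/- For every B ∈ (0,1), writing U₁(x) = (c₁(1-x)/(4μ²))·(ln((1+x)/(1-x)) + 2/(1-B²)) for x ∈ (-1,1), one has U₁'(-B) = -U₁'(B); consequently, if B solves equation (B), the function U (equal to U₁ on (-B,1] and to U₁(-x) + c₂ on (-1,-B]) is continuously differentiable on (-1,1). -/

import Mathlib

noncomputable section

/-- The function `U₁(x) = (c₁(1-x)/(4μ²))·(ln((1+x)/(1-x)) + 2/(1-B²))`. -/
def U₁ (μ c₁ B x : ℝ) : ℝ :=
  c₁ * (1 - x) / (4 * μ ^ 2) * (Real.log ((1 + x) / (1 - x)) + 2 / (1 - B ^ 2))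

/-- The function `U` of the switching problem: `U(x) = U₁(x)` for `x ∈ (-B, 1]` and
`U(x) = U₁(-x) + c₂` for `x ∈ (-1, -B]`. -/
def Ufun (μ c₁ c₂ B x : ℝ) : ℝ :=
  if -B < x then U₁ μ c₁ B x else U₁ μ c₁ B (-x) + c₂

/-- Explicit formula for the derivative of `U₁`. -/
def Dfun (μ c₁ B x : ℝ) : ℝ :=
  c₁ / (4 * μ ^ 2) * (2 / (1 + x) - (Real.log (1 + x) - Real.log (1 - x)) - 2 / (1 - B ^ 2))

lemma hasDerivAt_U₁ (μ c₁ B : ℝ) (hμ : μ ≠ 0) (x : ℝ) (hx : x ∈ Set.Ioo (-1 : ℝ) 1) :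
    HasDerivAt (U₁ μ c₁ B) (Dfun μ c₁ B x) x := by
  obtain ⟨hx1', hx2'⟩ := hx
  have hx1 : 0 < 1 + x := by linarith
  have hx2 : 0 < 1 - x := by linarith
  have hlog1 : HasDerivAt (fun y : ℝ => Real.log (1 + y)) (1 / (1 + x)) x := by
    have := ((hasDerivAt_id x).const_add 1).log hx1.ne'
    simpa using this
  have hlog2 : HasDerivAt (fun y : ℝ => Real.log (1 - y)) (-1 / (1 - x)) x := by
    have := ((hasDerivAt_id x).const_sub 1).log hx2.ne'
    simpa using this
  have hA : HasDerivAt (fun y : ℝ => c₁ * (1 - y) / (4 * μ ^ 2))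
      (c₁ * (-1) / (4 * μ ^ 2)) x :=
    (((hasDerivAt_id x).const_sub 1).const_mul c₁).div_const _
  have hL : HasDerivAt (fun y : ℝ => Real.log (1 + y) - Real.log (1 - y) + 2 / (1 - B ^ 2))
      (1 / (1 + x) - (-1 / (1 - x))) x := (hlog1.sub hlog2).add_const _
  have hV : HasDerivAt (fun y : ℝ => c₁ * (1 - y) / (4 * μ ^ 2) *
      (Real.log (1 + y) - Real.log (1 - y) + 2 / (1 - B ^ 2))) (Dfun μ c₁ B x) x := by
    have := hA.fun_mul hL
    refine this.congr_deriv ?_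
    have hμ2 : (4 : ℝ) * μ ^ 2 ≠ 0 := by positivity
    simp only [Dfun]
    field_simp
    ring
  refine hV.congr_of_eventuallyEq ?_
  have hmem : Set.Ioo (-1 : ℝ) 1 ∈ nhds x := (isOpen_Ioo).mem_nhds ⟨hx1', hx2'⟩
  filter_upwards [hmem] with y hy
  have hy1 : (0 : ℝ) < 1 + y := by linarith [hy.1]
  have hy2 : (0 : ℝ) < 1 - y := by linarith [hy.2]
  rw [U₁, Real.log_div hy1.ne' hy2.ne']

lemma Dfun_neg (μ c₁ B : ℝ) (hB : B ∈ Set.Ioo (0 : ℝ) 1) :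
    Dfun μ c₁ B (-B) = -Dfun μ c₁ B B := by
  obtain ⟨hB0, hB1⟩ := hB
  have h1 : (1 : ℝ) + B ≠ 0 := by linarith
  have h2 : (1 : ℝ) - B ≠ 0 := by linarith
  have h3 : (1 : ℝ) - B ^ 2 ≠ 0 := by nlinarith
  have key : 2/(1-B) + 2/(1+B) - 2/(1-B^2) - 2/(1-B^2) = 0 := by
    field_simp
    ring
  rw [Dfun, Dfun, show 1 + -B = 1 - B by ring, show 1 - -B = 1 + B by ring]
  linear_combination (c₁/(4*μ^2)) * key

lemma continuousAt_Dfun (μ c₁ B : ℝ) (x : ℝ) (hx : x ∈ Set.Ioo (-1 : ℝ) 1) :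
    ContinuousAt (Dfun μ c₁ B) x := by
  obtain ⟨hx1', hx2'⟩ := hx
  have hx1 : (0 : ℝ) < 1 + x := by linarith
  have hx2 : (0 : ℝ) < 1 - x := by linarith
  apply ContinuousAt.mul continuousAt_const
  apply ContinuousAt.sub
  apply ContinuousAt.sub
  · exact continuousAt_const.div (by fun_prop) hx1.ne'
  · exact ((Real.continuousAt_log hx1.ne').comp (by fun_prop)).sub
      ((Real.continuousAt_log hx2.ne').comp (by fun_prop))
  · exact continuousAt_const

/-- For every `B ∈ (0,1)`, one has `U₁'(-B) = -U₁'(B)`; consequently,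
if `B` solves equation (B), the function `U` (equal to `U₁` on `(-B,1]` and to
`U₁(-x) + c₂` on `(-1,-B]`) is continuously differentiable on `(-1,1)`. -/
theorem smoothFit_at_minus_B (μ c₀ c₁ c₂ : ℝ) (hμ : 0 < μ) (hc₀ : 0 < c₀)
    (hc₁ : 0 < c₁) (hc₂ : 0 < c₂) (B : ℝ) (hB : B ∈ Set.Ioo (0 : ℝ) 1) :
    deriv (U₁ μ c₁ B) (-B) = -deriv (U₁ μ c₁ B) B ∧
    (Real.log ((1 - B) / (1 + B)) + 2 * B / (1 - B ^ 2) = 2 * μ ^ 2 * c₂ / c₁ →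
      ContDiffOn ℝ 1 (Ufun μ c₁ c₂ B) (Set.Ioo (-1 : ℝ) 1)) := by
  obtain ⟨hB0, hB1⟩ := hB
  have hμ' : μ ≠ 0 := hμ.ne'
  have hBmem : B ∈ Set.Ioo (-1 : ℝ) 1 := ⟨by linarith, hB1⟩
  have hBmem' : -B ∈ Set.Ioo (-1 : ℝ) 1 := ⟨by linarith, by linarith⟩
  have h1 : (1 : ℝ) + B ≠ 0 := by linarith
  have h2 : (1 : ℝ) - B ≠ 0 := by linarith
  have h3 : (1 : ℝ) - B ^ 2 ≠ 0 := by nlinarith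
  have hdB := hasDerivAt_U₁ μ c₁ B hμ' B hBmem
  have hdB' := hasDerivAt_U₁ μ c₁ B hμ' (-B) hBmem'
  have hDneg := Dfun_neg μ c₁ B ⟨hB0, hB1⟩
  refine ⟨by rw [hdB'.deriv, hdB.deriv, hDneg], fun heq => ?_⟩
  -- value match at -B
  have hval : U₁ μ c₁ B (-B) = U₁ μ c₁ B B + c₂ := by
    rw [U₁, U₁, show 1 + -B = 1 - B by ring, show 1 - -B = 1 + B by ring,
      Real.log_div (by linarith : (0:ℝ) < 1 - B).ne' (by linarith : (0:ℝ) < 1 + B).ne',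
      Real.log_div (by linarith : (0:ℝ) < 1 + B).ne' (by linarith : (0:ℝ) < 1 - B).ne']
    rw [Real.log_div (by linarith : (0:ℝ) < 1 - B).ne'
      (by linarith : (0:ℝ) < 1 + B).ne'] at heq
    have hμ2 : (μ : ℝ) ^ 2 ≠ 0 := pow_ne_zero _ hμ'
    field_simp at heq ⊢
    nlinarith [heq, sq_nonneg μ, sq_nonneg B]
  -- the pieces
  set g : ℝ → ℝ := fun x => if -B < x then Dfun μ c₁ B x else -Dfun μ c₁ B (-x) with hg
  have hW : ∀ x ∈ Set.Ioo (-1 : ℝ) 1, HasDerivAt (fun y => U₁ μ c₁ B (-y) + c₂)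
      (-Dfun μ c₁ B (-x)) x := by
    intro x hx
    have hx' : -x ∈ Set.Ioo (-1 : ℝ) 1 := ⟨by linarith [hx.2], by linarith [hx.1]⟩
    have := ((hasDerivAt_U₁ μ c₁ B hμ' (-x) hx').comp x (hasDerivAt_neg x)).add_const c₂
    simpa [mul_comm] using this
  have hUg : ∀ x ∈ Set.Ioo (-1 : ℝ) 1, HasDerivAt (Ufun μ c₁ c₂ B) (g x) x := by
    intro x hx
    rcases lt_trichotomy (-B) x with hlt | heq' | hgt
    · rw [hg]
      simp only [if_pos hlt]
      refine (hasDerivAt_U₁ μ c₁ B hμ' x hx).congr_of_eventuallyEq ?_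
      filter_upwards [Ioi_mem_nhds hlt] with y hy
      exact if_pos hy
    · subst heq'
      have hR : HasDerivWithinAt (Ufun μ c₁ c₂ B) (Dfun μ c₁ B (-B)) (Set.Ici (-B)) (-B) := by
        refine (hdB'.hasDerivWithinAt).congr ?_ ?_
        · intro y hy
          rcases eq_or_lt_of_le (Set.mem_Ici.mp hy) with rfl | hlt
          · rw [Ufun, if_neg (lt_irrefl _), neg_neg, hval]
          · rw [Ufun, if_pos hlt]
        · rw [Ufun, if_neg (lt_irrefl _), neg_neg, hval]
      have hL : HasDerivWithinAt (Ufun μ c₁ c₂ B) (Dfun μ c₁ B (-B)) (Set.Iic (-B)) (-B) := by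
        have hWd := hW (-B) hx
        rw [neg_neg, ← hDneg] at hWd
        refine hWd.hasDerivWithinAt.congr ?_ ?_
        · intro y hy
          rw [Ufun, if_neg (not_lt.mpr hy)]
        · rw [Ufun, if_neg (lt_irrefl _)]
      have := (hL.union hR)
      rw [Set.Iic_union_Ici, hasDerivWithinAt_univ] at this
      have hgval : g (-B) = Dfun μ c₁ B (-B) := by
        rw [hg]; simp only [if_neg (lt_irrefl _)]
        rw [neg_neg, ← hDneg]
      rw [hgval]
      exact this
    · rw [hg]
      simp only [if_neg (not_lt.mpr hgt.le)]
      refine (hW x hx).congr_of_eventuallyEq ?_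
      filter_upwards [Iio_mem_nhds hgt] with y hy
      rw [Ufun, if_neg (not_lt.mpr hy.le)]
  have hgcont : ContinuousOn g (Set.Ioo (-1 : ℝ) 1) := by
    intro x hx
    have hDx := continuousAt_Dfun μ c₁ B x hx
    have hDnx : ContinuousAt (fun y => -Dfun μ c₁ B (-y)) x := by
      have hx' : -x ∈ Set.Ioo (-1 : ℝ) 1 := ⟨by linarith [hx.2], by linarith [hx.1]⟩
      exact ((continuousAt_Dfun μ c₁ B (-x) hx').comp (continuous_neg.continuousAt)).neg
    rcases lt_trichotomy (-B) x with hlt | heq' | hgt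
    · refine (hDx.congr ?_).continuousWithinAt
      filter_upwards [Ioi_mem_nhds hlt] with y hy
      exact (if_pos (Set.mem_Ioi.mp hy)).symm
    · subst heq'
      have hgval : g (-B) = Dfun μ c₁ B (-B) := by
        rw [hg]; simp only [if_neg (lt_irrefl _)]
        rw [neg_neg, ← hDneg]
      have hR : ContinuousWithinAt g (Set.Ici (-B)) (-B) := by
        refine (hDx.continuousWithinAt).congr ?_ hgval
        intro y hy
        rcases eq_or_lt_of_le (Set.mem_Ici.mp hy) with rfl | hlt
        · exact hgval
        · rw [hg]; simp only [if_pos hlt]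
      have hL : ContinuousWithinAt g (Set.Iic (-B)) (-B) := by
        refine (hDnx.continuousWithinAt).congr ?_ ?_
        · intro y hy
          exact if_neg (not_lt.mpr (Set.mem_Iic.mp hy))
        · exact if_neg (lt_irrefl _)
      have := hL.union hR
      rw [Set.Iic_union_Ici] at this
      exact this.mono (Set.subset_univ _)
    · refine (hDnx.congr ?_).continuousWithinAt
      filter_upwards [Iio_mem_nhds hgt] with y hy
      exact (if_neg (not_lt.mpr (Set.mem_Iio.mp hy).le)).symm
  -- conclude
  rw [show (1 : WithTop ℕ∞) = 0 + 1 by norm_num,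
    contDiffOn_succ_iff_deriv_of_isOpen isOpen_Ioo]
  refine ⟨fun x hx => ((hUg x hx).differentiableAt).differentiableWithinAt, ?_, ?_⟩
  · intro h; exact absurd h (by norm_num)
  · rw [contDiffOn_zero]
    refine hgcont.congr ?_
    intro x hx
    exact (hUg x hx).deriv
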